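/- Let n = 3 in the planar-face configuration, and suppose moreover that the points A_1, A_2, A_3 are affinely independent (not collinear). Then χ(M) = ∏_{i=1}^3 (a_{i−1},v_i,w_i)/(a_i,v_i,w_i) ≠ 1; that is, a Kokotsakis mesh with planar faces whose central face is a nondegenerate triangle is not infinitesimally flexible. -/

import Mathlib

open Matrix

/-- The scalar triple product `(a, b, c) = ⟨a, [b, c]⟩` in `ℝ³`. -/
noncomputable def tripleProd (a b c : Fin 3 → ℝ) : ℝ := a ⬝ᵥ crossProduct b c

/-- **A Kokotsakis mesh with planar faces over a nondegenerate triangle is not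
infinitesimally flexible:** for `n = 3`, if `A₁, A₂, A₃` are not collinear then
`χ(M) = ∏ᵢ (a_{i-1}, vᵢ, wᵢ)/(aᵢ, vᵢ, wᵢ) ≠ 1`. -/
theorem stmt10
    (A B v w : ZMod 3 → (Fin 3 → ℝ)) (t : ZMod 3 → ℝ)
    (a : ZMod 3 → (Fin 3 → ℝ)) (ha : ∀ i, a i = A (i + 1) - A i)
    -- all the points `Aᵢ`, `Bᵢ` lie in a common affine plane `π = {x | ⟨ν, x⟩ = d}`
    (ν : Fin 3 → ℝ) (d : ℝ) (hν : ν ≠ 0)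
    (hAπ : ∀ i, ν ⬝ᵥ A i = d) (hBπ : ∀ i, ν ⬝ᵥ B i = d)
    (hvw : ∀ i, LinearIndependent ℝ ![v i, w i])
    (hprev : ∀ i, tripleProd (a (i - 1)) (v i) (w i) ≠ 0)
    (hnext : ∀ i, tripleProd (a i) (v i) (w i) ≠ 0)
    (hBv0 : ∀ i, B (i - 1) - A i ≠ 0) (hBv1 : ∀ i, B i - A i ≠ 0)
    (hBs0 : ∀ i, B (i - 1) - A i ∈ Submodule.span ℝ ({v i, w i} : Set (Fin 3 → ℝ)))
    (hBs1 : ∀ i, B i - A i ∈ Submodule.span ℝ ({v i, w i} : Set (Fin 3 → ℝ)))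
    (hBB : ∀ i, B (i - 1) ≠ B i)
    (ht0 : ∀ i, t i ≠ 0) (ht1 : ∀ i, t i ≠ 1)
    (hAt : ∀ i, A i = t i • B (i - 1) + (1 - t i) • B i)
    -- the central triangle is nondegenerate
    (hA : ¬ Collinear ℝ ({A 1, A 2, A 3} : Set (Fin 3 → ℝ))) :
    ∏ i : ZMod 3, tripleProd (a (i - 1)) (v i) (w i) / tripleProd (a i) (v i) (w i) ≠ 1 := by
  intro hχ
  -- orthogonality of span members to the cross product
  have horth : ∀ i x, x ∈ Submodule.span ℝ ({v i, w i} : Set (Fin 3 → ℝ)) →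
      x ⬝ᵥ crossProduct (v i) (w i) = 0 := by
    intro i x hx
    rw [Submodule.mem_span_pair] at hx
    obtain ⟨m, n, rfl⟩ := hx
    rw [add_dotProduct, smul_dotProduct, smul_dotProduct,
      dot_self_cross, dot_cross_self]
    simp
  set G : ZMod 3 → ℝ := fun i => (B (i + 1) - A i) ⬝ᵥ crossProduct (v i) (w i) with hGdef
  -- numerator formula
  have hP : ∀ i, tripleProd (a (i - 1)) (v i) (w i) = -(t (i - 1)) * G i := by
    intro i
    have e : a (i - 1) = -(t (i - 1)) • (B (i + 1) - A i)
        + (-(1 - t (i - 1))) • (B (i - 1) - A i) := by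
      rw [ha, hAt (i - 1)]
      have h1 : i - 1 + 1 = i := by ring
      have h2 : i - 1 - 1 = i + 1 := by
        have : (-2 : ZMod 3) = 1 := by decide
        calc i - 1 - 1 = i + (-2) := by ring
        _ = i + 1 := by rw [this]
      rw [h1, h2]
      module
    rw [tripleProd, e, add_dotProduct, smul_dotProduct, smul_dotProduct,
      horth i _ (hBs0 i)]
    simp [hGdef, tripleProd]
  -- denominator formula
  have hQ : ∀ i, tripleProd (a i) (v i) (w i) = (1 - t (i + 1)) * G i := by
    intro i
    have e : a i = (t (i + 1)) • (B i - A i) + (1 - t (i + 1)) • (B (i + 1) - A i) := by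
      rw [ha, hAt (i + 1)]
      have h1 : i + 1 - 1 = i := by ring
      rw [h1]
      module
    rw [tripleProd, e, add_dotProduct, smul_dotProduct, smul_dotProduct,
      horth i _ (hBs1 i)]
    simp [hGdef, tripleProd]
  have hG : ∀ i, G i ≠ 0 := by
    intro i hGi
    exact hprev i (by rw [hP i, hGi, mul_zero])
  have h1t : ∀ i, (1 : ℝ) - t i ≠ 0 := fun i => sub_ne_zero.mpr (ht1 i).symm
  -- each factor
  have hfac : ∀ i, tripleProd (a (i - 1)) (v i) (w i) / tripleProd (a i) (v i) (w i)
      = -(t (i - 1)) / (1 - t (i + 1)) := by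
    intro i
    rw [hP i, hQ i, mul_div_mul_right _ _ (hG i)]
  -- expand the product
  have huniv : (Finset.univ : Finset (ZMod 3)) = {0, 1, 2} := by decide
  rw [huniv, Finset.prod_insert (by decide), Finset.prod_insert (by decide),
    Finset.prod_singleton, hfac 0, hfac 1, hfac 2] at hχ
  have e01 : (0 : ZMod 3) - 1 = 2 := by decide
  have e11 : (1 : ZMod 3) - 1 = 0 := by decide
  have e21 : (2 : ZMod 3) - 1 = 1 := by decide
  have e0p : (0 : ZMod 3) + 1 = 1 := by decide
  have e1p : (1 : ZMod 3) + 1 = 2 := by decide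
  have e2p : (2 : ZMod 3) + 1 = 0 := by decide
  rw [e01, e11, e21, e0p, e1p, e2p] at hχ
  -- the scalar constraint
  have hT : t 0 * t 1 * t 2 + (1 - t 0) * ((1 - t 1) * (1 - t 2)) = 0 := by
    rw [div_mul_div_comm, div_mul_div_comm,
      div_eq_iff (mul_ne_zero (h1t 1) (mul_ne_zero (h1t 2) (h1t 0)))] at hχ
    linear_combination -hχ
  -- the A's are collinear, contradiction
  apply hA
  rw [collinear_iff_exists_forall_eq_smul_vadd]
  refine ⟨A 0, A 2 - A 0, ?_⟩
  have key : ∀ k, t 2 * t 0 * (A 1 k - A 0 k) - t 0 * (1 - t 1) * (A 2 k - A 0 k) = 0 := by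
    intro k
    have e1 := congrFun (hAt 1) k
    have e2 := congrFun (hAt 2) k
    have e0 := congrFun (hAt 0) k
    rw [e11] at e1; rw [e21] at e2; rw [e01] at e0
    simp only [Pi.add_apply, Pi.smul_apply, smul_eq_mul] at e1 e2 e0
    linear_combination (t 2 * t 0) * e1 - (t 0 * (1 - t 1)) * e2
      + ((1 - t 1) * (1 - t 2)) * e0 + (B 0 k - A 0 k) * hT
  intro p hp
  have h30 : (3 : ZMod 3) = 0 := by decide
  rcases hp with rfl | rfl | rfl
  · refine ⟨(t 0 * (1 - t 1)) / (t 2 * t 0), ?_⟩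
    rw [vadd_eq_add]
    funext k
    have hk := key k
    have hne : t 2 * t 0 ≠ 0 := mul_ne_zero (ht0 2) (ht0 0)
    show A 1 k = t 0 * (1 - t 1) / (t 2 * t 0) * (A 2 k - A 0 k) + A 0 k
    rw [div_mul_eq_mul_div, div_add' _ _ _ hne, eq_div_iff hne]
    linear_combination hk
  · refine ⟨1, ?_⟩
    rw [vadd_eq_add]
    funext k
    show A 2 k = 1 * (A 2 k - A 0 k) + A 0 k
    ring
  · refine ⟨0, ?_⟩
    rw [h30, vadd_eq_add]
    funext k
    show A 0 k = 0 * (A 2 k - A 0 k) + A 0 k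
    ring
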